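/- Let R : ℝ → ℝ be the continuous function given by R(x) = (sin(πx)/(πx))² · 1/(1 − x²) for x ∉ {0, 1, −1}, with R(0) = 1 and R(±1) = 0 (the removable singularities filled in by continuity). Then R ∈ L¹(ℝ) and its Fourier transform R̂(t) = ∫_ℝ R(x) e^{−2πitx} dx equals 1 − |t| + sin(2π|t|)/(2π) for |t| ≤ 1 and equals 0 for |t| > 1. -/

import Mathlib

open MeasureTheory
open scoped Real FourierTransform

noncomputable section

/-- Selberg's function `R(x) = (sin(πx)/(πx))² / (1 - x²)`, with the removable
singularities at `x = 0` (value `1`) and `x = ±1` (value `0`) filled in by continuity. -/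
def selbergR (x : ℝ) : ℝ :=
  if x = 0 then 1
  else if x = 1 ∨ x = -1 then 0
  else (Real.sin (π * x) / (π * x)) ^ 2 * (1 / (1 - x ^ 2))

lemma hasDerivAt_sin_mul (a t : ℝ) :
    HasDerivAt (fun u : ℝ => Real.sin (a * u)) (a * Real.cos (a * t)) t := by
  have h := (Real.hasDerivAt_sin (a * t)).comp t ((hasDerivAt_id t).const_mul a)
  simp only [mul_one, mul_comm (Real.cos _)] at h
  exact h

lemma hasDerivAt_cos_mul (a t : ℝ) :
    HasDerivAt (fun u : ℝ => Real.cos (a * u)) (-(a * Real.sin (a * t))) t := by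
  have h := (Real.hasDerivAt_cos (a * t)).comp t ((hasDerivAt_id t).const_mul a)
  simp only [mul_one, neg_mul, mul_comm (Real.sin _)] at h
  exact h

lemma key_aux (a : ℝ) (ha : a ≠ 0) (hba : 2 * π + a ≠ 0) (hbs : 2 * π - a ≠ 0) :
    ∫ t in (0:ℝ)..1, (1 - t + Real.sin (2 * π * t) / (2 * π)) * Real.cos (a * t)
      = (1 - Real.cos a) / a ^ 2
        + (1 / (4 * π)) * ((1 - Real.cos a) / (2 * π + a) + (1 - Real.cos a) / (2 * π - a)) := by
  have hπ : (π : ℝ) ≠ 0 := Real.pi_ne_zero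
  have hH : ∀ t : ℝ, HasDerivAt
      (fun u : ℝ => (1 - u) * (Real.sin (a * u) / a) - Real.cos (a * u) / a ^ 2
        - (1 / (4 * π)) * (Real.cos ((2 * π + a) * u) / (2 * π + a)
            + Real.cos ((2 * π - a) * u) / (2 * π - a)))
      ((1 - t + Real.sin (2 * π * t) / (2 * π)) * Real.cos (a * t)) t := by
    intro t
    have h := ((((hasDerivAt_const t (1:ℝ)).sub (hasDerivAt_id t)).mul
        ((hasDerivAt_sin_mul a t).div_const a)).sub
        ((hasDerivAt_cos_mul a t).div_const (a ^ 2))).sub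
        ((((hasDerivAt_cos_mul (2 * π + a) t).div_const (2 * π + a)).add
          ((hasDerivAt_cos_mul (2 * π - a) t).div_const (2 * π - a))).const_mul (1 / (4 * π)))
    refine h.congr_deriv ?_
    simp only [Pi.sub_apply, id_eq]
    rw [show (2 * π + a) * t = 2 * π * t + a * t by ring,
        show (2 * π - a) * t = 2 * π * t - a * t by ring, Real.sin_add, Real.sin_sub]
    simp only [neg_div, mul_div_cancel_left₀ _ hba, mul_div_cancel_left₀ _ hbs]
    field_simp
    ring
  rw [intervalIntegral.integral_eq_sub_of_hasDerivAt (fun t _ => hH t)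
    (Continuous.intervalIntegrable (by continuity) 0 1)]
  simp only [mul_one, mul_zero, Real.cos_zero, Real.sin_zero]
  rw [show 2 * π + a = a + 2 * π by ring, Real.cos_add_two_pi, Real.cos_two_pi_sub,
    show a + 2 * π = 2 * π + a by ring]
  field_simp
  ring

lemma key_zero :
    ∫ t in (0:ℝ)..1, (1 - t + Real.sin (2 * π * t) / (2 * π)) = 1 / 2 := by
  have hπ : (π:ℝ) ≠ 0 := Real.pi_ne_zero
  have hH : ∀ t : ℝ, HasDerivAt
      (fun u : ℝ => u - u ^ 2 / 2 - Real.cos (2 * π * u) / (2 * π) ^ 2)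
      (1 - t + Real.sin (2 * π * t) / (2 * π)) t := by
    intro t
    have h := (((hasDerivAt_id t).sub (((hasDerivAt_id t).pow 2).div_const 2)).sub
      ((hasDerivAt_cos_mul (2 * π) t).div_const ((2 * π) ^ 2)))
    refine h.congr_deriv ?_
    simp only [Pi.sub_apply, id_eq]
    field_simp
    ring
  rw [intervalIntegral.integral_eq_sub_of_hasDerivAt (fun t _ => hH t)
    (Continuous.intervalIntegrable (by continuity) 0 1)]
  simp only [mul_one, mul_zero, Real.cos_zero, Real.cos_two_pi]
  field_simp
  ring

lemma key_one :
    ∫ t in (0:ℝ)..1, (1 - t + Real.sin (2 * π * t) / (2 * π)) * Real.cos (2 * π * t) = 0 := by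
  have hπ : (π:ℝ) ≠ 0 := Real.pi_ne_zero
  have hH : ∀ t : ℝ, HasDerivAt
      (fun u : ℝ => (1 - u) * (Real.sin (2 * π * u) / (2 * π))
        - Real.cos (2 * π * u) / (2 * π) ^ 2 + (Real.sin (2 * π * u)) ^ 2 / (8 * π ^ 2))
      ((1 - t + Real.sin (2 * π * t) / (2 * π)) * Real.cos (2 * π * t)) t := by
    intro t
    have h := ((((hasDerivAt_const t (1:ℝ)).sub (hasDerivAt_id t)).mul
        ((hasDerivAt_sin_mul (2 * π) t).div_const (2 * π))).sub
        ((hasDerivAt_cos_mul (2 * π) t).div_const ((2 * π) ^ 2))).add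
        (((hasDerivAt_sin_mul (2 * π) t).pow 2).div_const (8 * π ^ 2))
    refine h.congr_deriv ?_
    simp only [Pi.sub_apply, id_eq]
    field_simp
    ring
  rw [intervalIntegral.integral_eq_sub_of_hasDerivAt (fun t _ => hH t)
    (Continuous.intervalIntegrable (by continuity) 0 1)]
  simp [Real.cos_two_pi, Real.sin_two_pi]

lemma key (x : ℝ) :
    ∫ t in (0:ℝ)..1, (1 - t + Real.sin (2 * π * t) / (2 * π)) * Real.cos (2 * π * x * t)
      = selbergR x / 2 := by
  have hπ : (π:ℝ) ≠ 0 := Real.pi_ne_zero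
  have hπ0 : (0:ℝ) < π := Real.pi_pos
  by_cases hx0 : x = 0
  · subst hx0
    simp only [selbergR, if_pos rfl, mul_zero, zero_mul, Real.cos_zero, mul_one]
    rw [key_zero]; norm_num
  by_cases hx1 : x = 1
  · subst hx1
    simp only [selbergR, if_neg hx0, if_pos (Or.inl rfl), mul_one]
    rw [key_one]; norm_num
  by_cases hxm1 : x = -1
  · subst hxm1
    have e : (∫ t in (0:ℝ)..1,
        (1 - t + Real.sin (2 * π * t) / (2 * π)) * Real.cos (2 * π * (-1) * t))
        = ∫ t in (0:ℝ)..1, (1 - t + Real.sin (2 * π * t) / (2 * π)) * Real.cos (2 * π * t) := by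
      apply intervalIntegral.integral_congr
      intro t _
      simp only [show 2 * π * (-1) * t = -(2 * π * t) from by ring, Real.cos_neg]
    rw [e, key_one]
    simp [selbergR]
  · have h1 : (1:ℝ) - x ≠ 0 := sub_ne_zero.2 fun h => hx1 h.symm
    have h2 : (1:ℝ) + x ≠ 0 := fun h => hxm1 (by linarith)
    have ha : 2 * π * x ≠ 0 :=
      mul_ne_zero (mul_ne_zero two_ne_zero hπ) hx0
    have hba : 2 * π + 2 * π * x ≠ 0 := by
      have : 2 * π + 2 * π * x = 2 * π * (1 + x) := by ring
      rw [this]; exact mul_ne_zero (mul_ne_zero two_ne_zero hπ) h2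
    have hbs : 2 * π - 2 * π * x ≠ 0 := by
      have : 2 * π - 2 * π * x = 2 * π * (1 - x) := by ring
      rw [this]; exact mul_ne_zero (mul_ne_zero two_ne_zero hπ) h1
    have h1x2 : 1 - x ^ 2 ≠ 0 := by
      have e : (1 - x) * (1 + x) = 1 - x ^ 2 := by ring
      rw [← e]; exact mul_ne_zero h1 h2
    have hpx : π * x ≠ 0 := mul_ne_zero hπ hx0
    rw [key_aux (2 * π * x) ha hba hbs]
    have hcos : Real.cos (2 * π * x) = 1 - 2 * Real.sin (π * x) ^ 2 := by
      rw [show (2:ℝ) * π * x = 2 * (π * x) by ring, Real.cos_two_mul]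
      nlinarith [Real.sin_sq_add_cos_sq (π * x)]
    rw [hcos]
    simp only [selbergR, if_neg hx0, if_neg (by tauto : ¬(x = 1 ∨ x = -1))]
    field_simp
    ring

def selbergG (t : ℝ) : ℝ :=
  if |t| ≤ 1 then 1 - |t| + Real.sin (2 * π * |t|) / (2 * π) else 0

lemma selbergG_even (t : ℝ) : selbergG (-t) = selbergG t := by
  simp [selbergG, abs_neg]

lemma selbergG_eq_zero {t : ℝ} (h : 1 ≤ |t|) : selbergG t = 0 := by
  by_cases h1 : |t| ≤ 1
  · have e : |t| = 1 := le_antisymm h1 h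
    simp [selbergG, e, Real.sin_two_pi]
  · simp [selbergG, h1]

lemma selbergG_continuous : Continuous selbergG := by
  apply Continuous.if_le
  · fun_prop
  · exact continuous_const
  · exact continuous_abs
  · exact continuous_const
  · intro t ht
    rw [ht]
    simp [Real.sin_two_pi]

lemma selbergG_integrable : Integrable selbergG := by
  apply selbergG_continuous.integrable_of_hasCompactSupport
  apply HasCompactSupport.intro (isCompact_Icc (a := (-1:ℝ)) (b := 1))
  intro t ht
  apply selbergG_eq_zero
  rw [Set.mem_Icc, ← abs_le] at ht
  exact (not_le.1 ht).le

lemma ftg (x : ℝ) : 𝓕 (fun t : ℝ => (selbergG t : ℂ)) x = (selbergR x : ℂ) := by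
  rw [Real.fourier_real_eq_integral_exp_smul]
  set F : ℝ → ℂ := fun v => Complex.exp (↑(-2 * π * v * x) * Complex.I) • (selbergG v : ℂ)
    with hF
  have hsupp : Function.support F ⊆ Set.Ioc (-1 : ℝ) 1 := by
    intro v hv
    by_contra h
    apply hv
    have h1 : (1:ℝ) ≤ |v| := by
      rw [Set.mem_Ioc] at h
      rcases le_or_gt v (-1) with h' | h'
      · rw [abs_of_nonpos (by linarith)]; linarith
      · rw [abs_of_pos (by nlinarith [not_and.mp h h'] : (0:ℝ) < v)]
        exact le_of_not_ge fun hh => h ⟨h', hh⟩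
    simp [hF, selbergG_eq_zero h1]
  have hcont : Continuous F := by
    refine Continuous.smul (f := fun v => Complex.exp (↑(-2 * π * v * x) * Complex.I))
      (g := fun v => (selbergG v : ℂ)) ?_ ?_
    · fun_prop
    · exact Complex.continuous_ofReal.comp selbergG_continuous
  rw [← intervalIntegral.integral_eq_integral_of_support_subset hsupp]
  rw [← intervalIntegral.integral_add_adjacent_intervals (a := (-1:ℝ)) (b := 0) (c := 1)
    (hcont.intervalIntegrable _ _) (hcont.intervalIntegrable _ _)]
  have e1 : (∫ v in (-1:ℝ)..0, F v) = ∫ v in (0:ℝ)..1, F (-v) := by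
    rw [intervalIntegral.integral_comp_neg]
    norm_num
  rw [e1, ← intervalIntegral.integral_add
    (show IntervalIntegrable (fun v => F (-v)) volume 0 1 from
      (hcont.comp continuous_neg).intervalIntegrable _ _) (hcont.intervalIntegrable _ _)]
  have e2 : Set.EqOn (fun v => F (-v) + F v)
      (fun v => (((1 - v + Real.sin (2 * π * v) / (2 * π)) * (2 * Real.cos (2 * π * x * v)) : ℝ) : ℂ))
      (Set.uIcc (0:ℝ) 1) := by
    intro v hv
    rw [Set.uIcc_of_le (by norm_num), Set.mem_Icc] at hv
    have hG : selbergG v = 1 - v + Real.sin (2 * π * v) / (2 * π) := by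
      rw [selbergG, if_pos (by rw [abs_of_nonneg hv.1]; exact hv.2), abs_of_nonneg hv.1]
    have a1 : (↑(-2 * π * (-v) * x) : ℂ) * Complex.I = (↑(2 * π * x * v) : ℂ) * Complex.I := by
      push_cast; ring
    have a2 : (↑(-2 * π * v * x) : ℂ) * Complex.I = -(↑(2 * π * x * v) : ℂ) * Complex.I := by
      push_cast; ring
    simp only [hF, smul_eq_mul, selbergG_even, a1, a2]
    rw [← add_mul, ← Complex.two_cos, ← Complex.ofReal_cos]
    push_cast [hG]
    ring
  rw [intervalIntegral.integral_congr e2, intervalIntegral.integral_ofReal]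
  have e3 : (∫ v in (0:ℝ)..1, (1 - v + Real.sin (2 * π * v) / (2 * π)) * (2 * Real.cos (2 * π * x * v)))
      = 2 * ∫ v in (0:ℝ)..1, (1 - v + Real.sin (2 * π * v) / (2 * π)) * Real.cos (2 * π * x * v) := by
    rw [← intervalIntegral.integral_const_mul]
    apply intervalIntegral.integral_congr
    intro v _
    ring
  rw [e3, key]
  push_cast
  ring

lemma selbergR_neg (x : ℝ) : selbergR (-x) = selbergR x := by
  unfold selbergR
  by_cases h0 : x = 0
  · simp [h0]
  · rw [if_neg (by simpa using h0), if_neg h0]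
    by_cases h1 : x = 1 ∨ x = -1
    · have h1' : -x = 1 ∨ -x = -1 := by rcases h1 with h | h <;> simp [h]
      rw [if_pos h1', if_pos h1]
    · have h1' : ¬(-x = 1 ∨ -x = -1) := by
        rintro (h | h)
        · exact h1 (Or.inr (by linarith))
        · exact h1 (Or.inl (by linarith))
      rw [if_neg h1', if_neg h1]
      rw [show π * -x = -(π * x) by ring, Real.sin_neg, neg_div_neg_eq, neg_sq]

lemma sin_sq_le_sq (y : ℝ) : Real.sin y ^ 2 ≤ y ^ 2 := by
  have h := pow_le_pow_left₀ (abs_nonneg (Real.sin y)) (Real.abs_sin_le_abs (x := y)) 2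
  simpa [sq_abs] using h

lemma sin_pi_sq_le_one_sub (x : ℝ) : Real.sin (π * x) ^ 2 ≤ π ^ 2 * (1 - x) ^ 2 := by
  have e : Real.sin (π * (1 - x)) = Real.sin (π * x) := by
    rw [show π * (1 - x) = π - π * x by ring, Real.sin_pi_sub]
  have h := sin_sq_le_sq (π * (1 - x))
  rw [e] at h
  calc Real.sin (π * x) ^ 2 ≤ (π * (1 - x)) ^ 2 := h
    _ = π ^ 2 * (1 - x) ^ 2 := by ring

set_option maxHeartbeats 1000000 in
lemma selbergR_abs_le (x : ℝ) : |selbergR x| ≤ 3 * (1 + x ^ 2)⁻¹ := by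
  have hπ : (0:ℝ) < π := Real.pi_pos
  have h1x : (0:ℝ) < 1 + x ^ 2 := by positivity
  by_cases h0 : x = 0
  · subst h0; rw [selbergR]; norm_num
  by_cases h1 : x = 1 ∨ x = -1
  · rw [selbergR, if_neg h0, if_pos h1]
    simp; positivity
  · set s : ℝ := Real.sin (π * x) with hs
    have hs1 : s ^ 2 ≤ π ^ 2 * x ^ 2 := by
      have := sin_sq_le_sq (π * x)
      calc s ^ 2 ≤ (π * x) ^ 2 := this
        _ = π ^ 2 * x ^ 2 := by ring
    have hs2 : s ^ 2 ≤ π ^ 2 * (1 - x) ^ 2 := sin_pi_sq_le_one_sub x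
    have hs3 : s ^ 2 ≤ π ^ 2 * (1 + x) ^ 2 := by
      have h := sin_pi_sq_le_one_sub (-x)
      have e : Real.sin (π * -x) ^ 2 = s ^ 2 := by
        rw [show π * -x = -(π * x) by ring, Real.sin_neg]; ring
      rw [e] at h
      calc s ^ 2 ≤ π ^ 2 * (1 - -x) ^ 2 := h
        _ = π ^ 2 * (1 + x) ^ 2 := by ring
    have hx1 : x ≠ 1 := fun h => h1 (Or.inl h)
    have hxm1 : x ≠ -1 := fun h => h1 (Or.inr h)
    have hx2 : x ^ 2 ≠ 1 := by
      intro h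
      have h' : (x - 1) * (x + 1) = 0 := by nlinarith
      rcases mul_eq_zero.1 h' with h'' | h''
      · exact hx1 (by linarith)
      · exact hxm1 (by linarith)
    have hR : selbergR x = s ^ 2 / ((π * x) ^ 2 * (1 - x ^ 2)) := by
      rw [selbergR, if_neg h0, if_neg h1, div_pow, div_mul_div_comm, mul_one]
    have hpx : (0:ℝ) < (π * x) ^ 2 := by
      have h := mul_ne_zero (ne_of_gt hπ) h0
      positivity
    have habs : (0:ℝ) < |1 - x ^ 2| := abs_pos.2 (sub_ne_zero.2 fun h => hx2 h.symm)
    have hden : (0:ℝ) < (π * x) ^ 2 * |1 - x ^ 2| := mul_pos hpx habs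
    rw [hR, abs_div, abs_of_nonneg (sq_nonneg s), abs_mul, abs_of_nonneg (sq_nonneg (π * x)),
      show (3:ℝ) * (1 + x ^ 2)⁻¹ = 3 / (1 + x ^ 2) from (div_eq_mul_inv 3 _).symm,
      div_le_div_iff₀ hden h1x]
    rcases lt_or_gt_of_ne hx2 with hlt | hgt
    · rw [abs_of_pos (by linarith : (0:ℝ) < 1 - x ^ 2)]
      rcases le_or_gt (x ^ 2) (1 / 4) with hc | hc
      · have e1 : s ^ 2 * (1 + x ^ 2) ≤ π ^ 2 * x ^ 2 * (1 + x ^ 2) := by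
          nlinarith [mul_le_mul_of_nonneg_right hs1 h1x.le]
        have e2 : (0:ℝ) ≤ π ^ 2 * x ^ 2 * (2 - 4 * x ^ 2) :=
          mul_nonneg (mul_nonneg (sq_nonneg π) (sq_nonneg x)) (by linarith)
        nlinarith [e1, e2]
      · rcases le_or_gt x 0 with hxs | hxs
        · have hxa : x ≤ -(1/2) := by nlinarith
          have key1 : (0:ℝ) ≤ π ^ 2 * (1 + x) * ((-(x + 1/2)) * (4 * x ^ 2 - 4 * x + 3)) := by
            apply mul_nonneg (mul_nonneg (sq_nonneg π) (by nlinarith : (0:ℝ) ≤ 1 + x))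
            apply mul_nonneg (by linarith) (by nlinarith [sq_nonneg (2 * x - 1)])
          have e1 : s ^ 2 * (1 + x ^ 2) ≤ π ^ 2 * (1 + x) ^ 2 * (1 + x ^ 2) :=
            mul_le_mul_of_nonneg_right hs3 h1x.le
          have e2 : (0:ℝ) ≤ π ^ 2 * (1 + x) :=
            mul_nonneg (sq_nonneg π) (by nlinarith)
          nlinarith [e1, key1, e2]
        · have hxa : (1/2:ℝ) ≤ x := by nlinarith
          have key2 : (0:ℝ) ≤ π ^ 2 * (1 - x) * ((x - 1/2) * (4 * x ^ 2 + 4 * x + 3)) := by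
            apply mul_nonneg (mul_nonneg (sq_nonneg π) (by nlinarith : (0:ℝ) ≤ 1 - x))
            apply mul_nonneg (by linarith) (by nlinarith [sq_nonneg (2 * x + 1)])
          have e1 : s ^ 2 * (1 + x ^ 2) ≤ π ^ 2 * (1 - x) ^ 2 * (1 + x ^ 2) :=
            mul_le_mul_of_nonneg_right hs2 h1x.le
          have e2 : (0:ℝ) ≤ π ^ 2 * (1 - x) :=
            mul_nonneg (sq_nonneg π) (by nlinarith)
          nlinarith [e1, key2, e2]
    · rw [abs_of_neg (by linarith : 1 - x ^ 2 < 0)]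
      have hA : s ^ 2 ≤ π ^ 2 * (x ^ 2 - 1) := by
        have h4 : (s ^ 2) ^ 2 ≤ (π ^ 2 * (x ^ 2 - 1)) ^ 2 := by
          calc (s ^ 2) ^ 2 = s ^ 2 * s ^ 2 := by ring
            _ ≤ (π ^ 2 * (1 - x) ^ 2) * (π ^ 2 * (1 + x) ^ 2) :=
                mul_le_mul hs2 hs3 (sq_nonneg s) (by positivity)
            _ = (π ^ 2 * (x ^ 2 - 1)) ^ 2 := by ring
        have hA0 : (0:ℝ) < π ^ 2 * (x ^ 2 - 1) := by
          apply mul_pos (by positivity); nlinarith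
        nlinarith [h4, hA0, sq_nonneg s,
          (show (0:ℝ) < s ^ 2 + π ^ 2 * (x ^ 2 - 1) by nlinarith [sq_nonneg s])]
      have e1 : s ^ 2 * (1 + x ^ 2) ≤ π ^ 2 * (x ^ 2 - 1) * (1 + x ^ 2) :=
        mul_le_mul_of_nonneg_right hA h1x.le
      have e2 : (0:ℝ) ≤ π ^ 2 * (x ^ 2 - 1) * (2 * x ^ 2 - 1) :=
        mul_nonneg (mul_nonneg (sq_nonneg π) (by linarith)) (by linarith)
      nlinarith [e1, e2]

lemma selbergR_continuous : Continuous selbergR := by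
  have hc : Continuous (𝓕 (fun t : ℝ => (selbergG t : ℂ))) :=
    VectorFourier.fourierIntegral_continuous Real.continuous_fourierChar
      (by exact continuous_inner) selbergG_integrable.ofReal
  have e : selbergR = fun x => (𝓕 (fun t : ℝ => (selbergG t : ℂ)) x).re := by
    funext x
    rw [ftg, Complex.ofReal_re]
  rw [e]
  exact Complex.continuous_re.comp hc

lemma selbergR_integrable : Integrable selbergR := by
  apply Integrable.mono' (integrable_inv_one_add_sq.const_mul 3)
    selbergR_continuous.aestronglyMeasurable
  filter_upwards with x
  simpa [Real.norm_eq_abs] using selbergR_abs_le x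

theorem selbergR_fourier :
    Continuous selbergR ∧ Integrable selbergR ∧
      ∀ t : ℝ,
        (|t| ≤ 1 → 𝓕 (fun x : ℝ => (selbergR x : ℂ)) t =
          ((1 - |t| + Real.sin (2 * π * |t|) / (2 * π) : ℝ) : ℂ)) ∧
        (1 < |t| → 𝓕 (fun x : ℝ => (selbergR x : ℂ)) t = 0) := by
  have hGc : Continuous (fun t : ℝ => (selbergG t : ℂ)) :=
    Complex.continuous_ofReal.comp selbergG_continuous
  have hft : 𝓕 (fun t : ℝ => (selbergG t : ℂ)) = fun x : ℝ => (selbergR x : ℂ) :=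
    funext ftg
  have h'f : Integrable (𝓕 (fun t : ℝ => (selbergG t : ℂ))) := by
    rw [hft]; exact selbergR_integrable.ofReal
  have hinv : 𝓕⁻ (fun t : ℝ => (selbergG t : ℂ)) = fun x : ℝ => (selbergR x : ℂ) := by
    funext w
    rw [Real.fourierInv_eq_fourier_neg, hft]
    simp only
    rw [selbergR_neg]
  have main : 𝓕 (fun x : ℝ => (selbergR x : ℂ)) = fun t : ℝ => (selbergG t : ℂ) := by
    rw [← hinv]
    exact Continuous.fourier_fourierInv_eq hGc selbergG_integrable.ofReal h'f
  refine ⟨selbergR_continuous, selbergR_integrable, fun t => ⟨fun ht => ?_, fun ht => ?_⟩⟩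
  · rw [main]
    simp only [selbergG, if_pos ht]
  · rw [main]
    simp only [selbergG_eq_zero ht.le, Complex.ofReal_zero]
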